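/- A path-type Δ_1 ≻ Δ_2 ≻ ⋯ ≻ Δ_t for ℓ appears in T(ℓ) with some choice of exponents m_1, …, m_t ≥ 1 if and only if it is admissible, i.e., for every 1 ≤ n ≤ t, each k such that Δ_n requires ω_k is provided by some Δ_i with i < n. -/

import Mathlib

open Finset

/-- The `ℓ`-th standard basis vector of `ℤ^r`. -/
def eVec {r : ℕ} (ℓ : Fin r) : Fin r → ℤ := fun k => if k = ℓ then 1 else 0

/-- `Δ` provides `ω_k`: the `k`-th coordinate of `e_ℓ − C·Δ` is positive. -/
def Provides {r : ℕ} (C : Matrix (Fin r) (Fin r) ℤ) (ℓ : Fin r) (Δ : Fin r → ℤ)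
    (k : Fin r) : Prop :=
  0 < eVec ℓ k - ∑ j, C k j * Δ j

instance {r : ℕ} (C : Matrix (Fin r) (Fin r) ℤ) (ℓ : Fin r) (Δ : Fin r → ℤ) (k : Fin r) :
    Decidable (Provides C ℓ Δ k) := by unfold Provides; infer_instance

/-- `Δ` requires `ω_k`: the `k`-th coordinate of `e_ℓ − C·Δ` is negative. -/
def Requires {r : ℕ} (C : Matrix (Fin r) (Fin r) ℤ) (ℓ : Fin r) (Δ : Fin r → ℤ)
    (k : Fin r) : Prop :=
  eVec ℓ k - ∑ j, C k j * Δ j < 0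

/-- A path-type: a finite strictly decreasing sequence of nonzero elements of `ℕ^r`. -/
def IsPathType {r : ℕ} (Δs : List (Fin r → ℤ)) : Prop :=
  (∀ Δ ∈ Δs, (∀ k, 0 ≤ Δ k) ∧ Δ ≠ 0) ∧ List.Chain' (fun x y => y < x) Δs

/-- Admissibility: every `ω_k` required by `Δ_n` is provided by some earlier `Δ_i`. -/
def Admissible {r : ℕ} (C : Matrix (Fin r) (Fin r) ℤ) (ℓ : Fin r)
    (Δs : List (Fin r → ℤ)) : Prop :=
  ∀ n, n < Δs.length → ∀ k, Requires C ℓ (Δs.getD n 0) k →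
    ∃ i, i < n ∧ Provides C ℓ (Δs.getD i 0) k

/-- `g(Δ_1⋯Δ_t) = t + Σ_{k : f(k) exists} Δ_{f(k)}(k)`, where `f(k)` is the least index
providing `ω_k`. -/
def gval {r : ℕ} (C : Matrix (Fin r) (Fin r) ℤ) (ℓ : Fin r) (Δs : List (Fin r → ℤ)) : ℤ :=
  (Δs.length : ℤ) + ∑ k : Fin r,
    (if h : ((Finset.range Δs.length).filter
        fun i => Provides C ℓ (Δs.getD i 0) k).Nonempty
      then Δs.getD (((Finset.range Δs.length).filter
        fun i => Provides C ℓ (Δs.getD i 0) k).min' h) 0 k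
      else 0)

/-- The set of values of `g` on admissible path-types for `ℓ`. -/
def gSet {r : ℕ} (C : Matrix (Fin r) (Fin r) ℤ) (ℓ : Fin r) : Set ℤ :=
  {g | ∃ Δs : List (Fin r → ℤ), IsPathType Δs ∧ Admissible C ℓ Δs ∧ gval C ℓ Δs = g}

/-- The expansion `Δ_1^{m_1} ⋯ Δ_t^{m_t}` of a path-type with exponents. -/
def expandPath {r : ℕ} (Δs : List (Fin r → ℤ)) (ms : List ℕ) : List (Fin r → ℤ) :=
  (Δs.zip ms).flatMap fun p => List.replicate p.2 p.1

/-- The path-type appears in `T(ℓ)` with exponents `ms`: with `δ_1, …, δ_s` the expanded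
sequence and `d_n = δ_1 + ⋯ + δ_n`, every coordinate of `n·e_ℓ − C·d_n` is `≥ 0` for
`1 ≤ n ≤ s`. -/
def AppearsWith {r : ℕ} (C : Matrix (Fin r) (Fin r) ℤ) (ℓ : Fin r)
    (Δs : List (Fin r → ℤ)) (ms : List ℕ) : Prop :=
  ∀ n, 1 ≤ n → n ≤ (expandPath Δs ms).length → ∀ k,
    0 ≤ (n : ℤ) * eVec ℓ k - ∑ j, C k j * ((expandPath Δs ms).take n).sum j

private def fk {r : ℕ} (C : Matrix (Fin r) (Fin r) ℤ) (ℓ : Fin r) (δ : Fin r → ℤ) (k : Fin r) : ℤ :=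
  eVec ℓ k - ∑ j, C k j * δ j

private lemma list_sum_nonpos : ∀ (l : List ℤ), (∀ x ∈ l, x ≤ 0) → l.sum ≤ 0
  | [], _ => le_refl 0
  | x :: l, h => by
      simp only [List.sum_cons]
      have h1 := list_sum_nonpos l (fun y hy => h y (List.mem_cons_of_mem _ hy))
      have h2 := h x List.mem_cons_self
      linarith

private lemma sumEq {r : ℕ} (C : Matrix (Fin r) (Fin r) ℤ) (ℓ : Fin r) :
    ∀ (L : List (Fin r → ℤ)) (k : Fin r),
      (L.length : ℤ) * eVec ℓ k - ∑ j, C k j * L.sum j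
        = (L.map (fun δ => fk C ℓ δ k)).sum
  | [], k => by simp
  | δ :: L, k => by
      have ih := sumEq C ℓ L k
      simp only [List.length_cons, List.sum_cons, List.map_cons, Pi.add_apply]
      push_cast
      simp only [mul_add, Finset.sum_add_distrib]
      unfold fk at *
      linarith

private def GoodFrom {r : ℕ} (C : Matrix (Fin r) (Fin r) ℤ) (ℓ : Fin r)
    (c : Fin r → ℤ) (L : List (Fin r → ℤ)) : Prop :=
  ∀ n, n ≤ L.length → ∀ k, 0 ≤ c k + ((L.take n).map (fun δ => fk C ℓ δ k)).sum

private lemma goodFrom_append {r : ℕ} {C : Matrix (Fin r) (Fin r) ℤ} {ℓ : Fin r}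
    {c : Fin r → ℤ} {L1 L2 : List (Fin r → ℤ)}
    (h1 : GoodFrom C ℓ c L1)
    (h2 : GoodFrom C ℓ (fun k => c k + (L1.map (fun δ => fk C ℓ δ k)).sum) L2) :
    GoodFrom C ℓ c (L1 ++ L2) := by
  intro n hn k
  rcases le_or_gt n L1.length with h | h
  · rw [List.take_append_of_le_length h]; exact h1 n h k
  · have hn' : n = L1.length + (n - L1.length) := by omega
    rw [hn', List.take_append, List.map_append, List.sum_append]
    rw [List.take_of_length_le (l := L1) (by omega), Nat.add_sub_cancel_left]
    have h3 := h2 (n - L1.length) (by simp only [List.length_append] at hn; omega) k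
    simp only at h3
    linarith

private lemma goodFrom_replicate {r : ℕ} {C : Matrix (Fin r) (Fin r) ℤ} {ℓ : Fin r}
    {c : Fin r → ℤ} {a : Fin r → ℤ} {m : ℕ}
    (h0 : ∀ k, 0 ≤ c k) (hm : ∀ k, 0 ≤ c k + (m : ℤ) * fk C ℓ a k) :
    GoodFrom C ℓ c (List.replicate m a) := by
  intro n hn k
  rw [List.length_replicate] at hn
  rw [List.take_replicate, min_eq_left hn, List.map_replicate, List.sum_replicate,
    nsmul_eq_mul]
  have hnm : (n : ℤ) ≤ (m : ℤ) := by exact_mod_cast hn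
  have hn0 : (0 : ℤ) ≤ (n : ℤ) := by positivity
  rcases le_or_gt 0 (fk C ℓ a k) with h | h
  · nlinarith [h0 k]
  · nlinarith [hm k]

private lemma grec {r : ℕ} (C : Matrix (Fin r) (Fin r) ℤ) (ℓ : Fin r) :
    ∀ (ps : List ((Fin r → ℤ) × ℕ)) (c : Fin r → ℤ),
      (∀ k, 0 ≤ c k) →
      (∀ q, q < ps.length → ∀ k, ∀ j, j ≤ (ps.getD q default).2 →
        0 ≤ c k + ∑ i ∈ Finset.range q,
            ((ps.getD i default).2 : ℤ) * fk C ℓ (ps.getD i default).1 k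
          + (j : ℤ) * fk C ℓ (ps.getD q default).1 k) →
      GoodFrom C ℓ c (ps.flatMap fun p => List.replicate p.2 p.1)
  | [], c, h0, _ => by
      intro n hn k
      simp only [List.flatMap_nil, List.length_nil, Nat.le_zero] at hn
      subst hn
      simpa using h0 k
  | (a, m) :: ps, c, h0, hstep => by
      rw [List.flatMap_cons]
      have hm0 : ∀ k, 0 ≤ c k + (m : ℤ) * fk C ℓ a k := by
        intro k
        have h := hstep 0 (by simp) k m (le_refl m)
        simp only [Finset.range_zero, Finset.sum_empty, add_zero, List.getD_cons_zero] at h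
        exact h
      apply goodFrom_append (goodFrom_replicate h0 hm0)
      have hceq : (fun k => c k + ((List.replicate m a).map (fun δ => fk C ℓ δ k)).sum)
          = fun k => c k + (m : ℤ) * fk C ℓ a k := by
        funext k
        rw [List.map_replicate, List.sum_replicate, nsmul_eq_mul]
      rw [hceq]
      apply grec C ℓ ps _ hm0
      intro q hq k j hj
      have h := hstep (q + 1) (by simpa using Nat.succ_lt_succ hq) k j
        (by simpa [List.getD_cons_succ] using hj)
      rw [Finset.sum_range_succ'] at h
      simp only [List.getD_cons_succ, List.getD_cons_zero] at h
      linarith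

private lemma appears_of_good {r : ℕ} {C : Matrix (Fin r) (Fin r) ℤ} {ℓ : Fin r}
    {Δs : List (Fin r → ℤ)} {ms : List ℕ}
    (h : GoodFrom C ℓ 0 (expandPath Δs ms)) : AppearsWith C ℓ Δs ms := by
  intro n h1 h2 k
  have hlen : ((expandPath Δs ms).take n).length = n := by
    rw [List.length_take]; omega
  have hs := sumEq C ℓ ((expandPath Δs ms).take n) k
  rw [hlen] at hs
  rw [hs]
  have h3 := h n h2 k
  simpa using h3

set_option maxHeartbeats 1000000

/-- a path-type for `ℓ` appears in `T(ℓ)` with some exponents `m_1, …, m_t ≥ 1`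
if and only if it is admissible. -/
theorem stmt8 {r : ℕ} (hr : 0 < r)
    (C : Matrix (Fin r) (Fin r) ℤ)
    (hdiag : ∀ i, C i i = 2)
    (hsym : ∀ i j, C i j = C j i)
    (hoff : ∀ i j, i ≠ j → C i j = 0 ∨ C i j = -1)
    (ℓ : Fin r) (Δs : List (Fin r → ℤ)) (hΔs : IsPathType Δs) :
    (∃ ms : List ℕ, ms.length = Δs.length ∧ (∀ x ∈ ms, 1 ≤ x) ∧ AppearsWith C ℓ Δs ms) ↔
      Admissible C ℓ Δs := by
  constructor
  · rintro ⟨ms, hlen, hms, happ⟩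
    intro n hn k hreq
    by_contra hno
    push_neg at hno
    have hnm : n < ms.length := by omega
    set L1 := expandPath (Δs.take n) (ms.take n) with hL1
    have hzip : Δs.zip ms = (Δs.take n).zip (ms.take n) ++ (Δs.drop n).zip (ms.drop n) := by
      conv_lhs => rw [← List.take_append_drop n Δs, ← List.take_append_drop n ms]
      rw [List.zip_append (by rw [List.length_take, List.length_take, hlen])]
    have hm1 : 1 ≤ ms[n] := hms _ (List.getElem_mem hnm)
    obtain ⟨m', hm'⟩ : ∃ m', ms[n] = m' + 1 := ⟨ms[n] - 1, by omega⟩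
    have hexp : expandPath Δs ms = L1 ++ Δs[n] ::
        (List.replicate m' Δs[n] ++
          ((Δs.drop (n+1)).zip (ms.drop (n+1))).flatMap fun p => List.replicate p.2 p.1) := by
      unfold expandPath
      rw [hzip, List.flatMap_append, List.drop_eq_getElem_cons hn,
        List.drop_eq_getElem_cons hnm, List.zip_cons_cons, List.flatMap_cons, hm',
        List.replicate_succ]
      simp [hL1, expandPath]
    set p := L1.length + 1 with hp
    have hple : p ≤ (expandPath Δs ms).length := by
      rw [hexp, List.length_append, List.length_cons]; omega
    have htake : (expandPath Δs ms).take p = L1 ++ [Δs[n]] := by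
      rw [hexp, hp, List.take_append]
      simp
    have happn := happ p (by omega) hple k
    rw [htake] at happn
    have hs := sumEq C ℓ (L1 ++ [Δs[n]]) k
    have hlen2 : ((L1 ++ [Δs[n]]).length : ℤ) = (p : ℤ) := by
      simp [hp]
    rw [hlen2] at hs
    rw [hs, List.map_append, List.sum_append] at happn
    have hS1 : ((L1.map fun δ => fk C ℓ δ k)).sum ≤ 0 := by
      apply list_sum_nonpos
      intro x hx
      rw [List.mem_map] at hx
      obtain ⟨δ, hδ, rfl⟩ := hx
      rw [hL1] at hδ
      unfold expandPath at hδ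
      rw [List.mem_flatMap] at hδ
      obtain ⟨pr, hpr, hdel⟩ := hδ
      rcases pr with ⟨d, mm⟩
      have hd : δ = d := List.eq_of_mem_replicate hdel
      subst hd
      have hmem : δ ∈ Δs.take n := (List.of_mem_zip hpr).1
      obtain ⟨i, hi, hig⟩ := List.getElem_of_mem hmem
      have hin : i < n := by
        have := hi; rw [List.length_take] at this; omega
      have hiΔ : i < Δs.length := by omega
      rw [List.getElem_take] at hig
      have hprov := hno i hin
      rw [List.getD_eq_getElem _ _ hiΔ, hig] at hprov
      unfold Provides at hprov
      unfold fk
      omega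
    have hreq' : fk C ℓ Δs[n] k < 0 := by
      rw [List.getD_eq_getElem _ _ hn] at hreq
      exact hreq
    simp only [List.map_cons, List.map_nil, List.sum_cons, List.sum_nil, add_zero] at happn
    linarith
  · intro hadm
    classical
    obtain ⟨t, ht⟩ : ∃ t : ℕ, t = Δs.length := ⟨_, rfl⟩
    obtain ⟨w, hw⟩ : ∃ w : ℕ → Fin r → ℤ, w = fun i k => fk C ℓ (Δs.getD i 0) k := ⟨_, rfl⟩
    have hAdm : ∀ q, q < t → ∀ k, w q k < 0 → ∃ i, i < q ∧ 0 < w i k := by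
      intro q hq k hneg
      simp only [hw] at hneg ⊢
      obtain ⟨i, hi, hp⟩ := hadm q (ht ▸ hq) k hneg
      exact ⟨i, hi, hp⟩
    obtain ⟨B, hB⟩ : ∃ B : ℕ, B = ∑ i ∈ Finset.range t, ∑ k : Fin r, (w i k).natAbs := ⟨_, rfl⟩
    have hBle : ∀ i, i < t → ∀ k, |w i k| ≤ (B : ℤ) := by
      intro i hi k
      have h1 : (w i k).natAbs ≤ B := by
        rw [hB]
        calc (w i k).natAbs ≤ ∑ k : Fin r, (w i k).natAbs :=
              Finset.single_le_sum (f := fun k => (w i k).natAbs)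
                (fun _ _ => Nat.zero_le _) (Finset.mem_univ k)
          _ ≤ _ := Finset.single_le_sum (f := fun i => ∑ k : Fin r, (w i k).natAbs)
              (fun _ _ => Nat.zero_le _) (Finset.mem_range.mpr hi)
      calc |w i k| = ((w i k).natAbs : ℤ) := Int.abs_eq_natAbs _
        _ ≤ (B : ℤ) := by exact_mod_cast h1
    have hB0 : (0 : ℤ) ≤ (B : ℤ) := by positivity
    obtain ⟨M, hM⟩ : ∃ M : ℕ, M = t * B + 1 := ⟨_, rfl⟩
    have hM1 : 1 ≤ M := by omega
    have hM1' : (1 : ℤ) ≤ (M : ℤ) := by exact_mod_cast hM1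
    obtain ⟨ms, hms⟩ : ∃ ms : List ℕ, ms = (List.range t).map (fun i => M ^ (t - 1 - i)) :=
      ⟨_, rfl⟩
    have hmslen : ms.length = t := by simp [hms]
    have hmsget : ∀ i, i < t → ms.getD i 0 = M ^ (t - 1 - i) := by
      intro i hi
      rw [List.getD_eq_getElem _ _ (by rw [hmslen]; exact hi)]
      simp [hms]
    -- star claim
    have star : ∀ q, q < t → ∀ k, ∀ j : ℕ, j ≤ M ^ (t - 1 - q) →
        0 ≤ ∑ i ∈ Finset.range q, ((M ^ (t - 1 - i) : ℕ) : ℤ) * w i k + (j : ℤ) * w q k := by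
      intro q hq k j hj
      by_cases hex : ∃ i, i < q ∧ 0 < w i k
      · have hspec := Nat.find_spec hex
        set i0 := Nat.find hex with hi0def
        have hmin : ∀ i, i < i0 → ¬(i < q ∧ 0 < w i k) := fun i hi => Nat.find_min hex hi
        have hzero' : ∀ i < i0, w i k = 0 := by
          intro i hi
          have hiq : i < q := lt_trans hi hspec.1
          rcases lt_trichotomy (w i k) 0 with h | h | h
          · obtain ⟨i', hi', hpos⟩ := hAdm i (lt_trans hiq hq) k h
            exact absurd ⟨lt_trans hi' hiq, hpos⟩ (hmin i' (lt_trans hi' hi))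
          · exact h
          · exact absurd ⟨hiq, h⟩ (hmin i hi)
        have hi0q : i0 < q := hspec.1
        have hsplit : ∑ i ∈ Finset.range q, ((M ^ (t - 1 - i) : ℕ) : ℤ) * w i k
            = ((M ^ (t - 1 - i0) : ℕ) : ℤ) * w i0 k
              + ∑ i ∈ Finset.Ico (i0 + 1) q, ((M ^ (t - 1 - i) : ℕ) : ℤ) * w i k := by
          rw [Finset.range_eq_Ico,
            ← Finset.sum_Ico_consecutive (fun i => ((M ^ (t - 1 - i) : ℕ) : ℤ) * w i k)
              (Nat.zero_le (i0 + 1)) hi0q,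
            ← Finset.range_eq_Ico, Finset.sum_range_succ,
            Finset.sum_eq_zero (fun i hi => by
              rw [hzero' i (Finset.mem_range.mp hi), mul_zero]), zero_add]
        obtain ⟨A, hA⟩ : ∃ A : ℤ, A = (M : ℤ) ^ (t - 2 - i0) := ⟨_, rfl⟩
        have hA1 : (1 : ℤ) ≤ A := hA ▸ one_le_pow₀ hM1'
        have hpow_i0 : ((M ^ (t - 1 - i0) : ℕ) : ℤ) = (M : ℤ) * A := by
          rw [hA]
          push_cast
          rw [← pow_succ']
          congr 1
          omega
        have hIco : ∀ i ∈ Finset.Ico (i0 + 1) q,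
            -(A * B) ≤ ((M ^ (t - 1 - i) : ℕ) : ℤ) * w i k := by
          intro i hi
          rw [Finset.mem_Ico] at hi
          have hpowle : ((M ^ (t - 1 - i) : ℕ) : ℤ) ≤ A := by
            rw [hA]
            push_cast
            exact pow_le_pow_right₀ hM1' (by omega)
          have hwb : |w i k| ≤ (B : ℤ) := hBle i (by omega) k
          have hpow0 : (0 : ℤ) ≤ ((M ^ (t - 1 - i) : ℕ) : ℤ) := by positivity
          nlinarith [neg_abs_le (w i k), abs_nonneg (w i k)]
        have hIcoSum : -(((q - (i0 + 1) : ℕ) : ℤ) * (A * B))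
            ≤ ∑ i ∈ Finset.Ico (i0 + 1) q, ((M ^ (t - 1 - i) : ℕ) : ℤ) * w i k := by
          have h := Finset.card_nsmul_le_sum (Finset.Ico (i0 + 1) q) _ (-(A * B)) hIco
          rw [Nat.card_Ico, nsmul_eq_mul] at h
          rw [← neg_mul_eq_mul_neg] at h
          linarith
        have hjwq : -(A * B) ≤ (j : ℤ) * w q k := by
          have hjA : (j : ℤ) ≤ A := by
            calc (j : ℤ) ≤ ((M ^ (t - 1 - q) : ℕ) : ℤ) := by exact_mod_cast hj
              _ ≤ A := by rw [hA]; push_cast; exact pow_le_pow_right₀ hM1' (by omega)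
          have hwb : |w q k| ≤ (B : ℤ) := hBle q hq k
          have hj0 : (0 : ℤ) ≤ (j : ℤ) := by positivity
          nlinarith [neg_abs_le (w q k), abs_nonneg (w q k)]
        rw [hsplit]
        have hw0 : (1 : ℤ) ≤ w i0 k := hspec.2
        have hMeq : (M : ℤ) = (t : ℤ) * (B : ℤ) + 1 := by rw [hM]; push_cast; ring
        have hA0 : (0 : ℤ) ≤ A := by linarith
        have hAB0 : (0 : ℤ) ≤ A * (B : ℤ) := mul_nonneg hA0 hB0
        have h1 : (M : ℤ) * A ≤ ((M ^ (t - 1 - i0) : ℕ) : ℤ) * w i0 k := by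
          rw [hpow_i0]
          nlinarith [hA1, hM1']
        have hcle : ((q - (i0 + 1) : ℕ) : ℤ) ≤ (t : ℤ) - 1 := by omega
        have hmul := mul_le_mul_of_nonneg_right hcle hAB0
        have hMA' : (M : ℤ) * A = (t : ℤ) * (A * (B : ℤ)) + A := by rw [hMeq]; ring
        nlinarith [hIcoSum, hjwq, h1, hmul, hMA', hA1]
      · push_neg at hex
        have hzero : ∀ i < q, w i k = 0 := by
          intro i hi
          rcases lt_trichotomy (w i k) 0 with h | h | h
          · obtain ⟨i', hi', hpos⟩ := hAdm i (lt_trans hi hq) k h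
            exact absurd hpos (not_lt.mpr (hex i' (lt_trans hi' hi)))
          · exact h
          · exact absurd h (not_lt.mpr (hex i hi))
        have hq0 : 0 ≤ w q k := by
          by_contra hneg
          push_neg at hneg
          obtain ⟨i, hi, hpos⟩ := hAdm q hq k hneg
          exact absurd hpos (not_lt.mpr (hex i hi))
        rw [Finset.sum_eq_zero (fun i hi => by
          rw [hzero i (Finset.mem_range.mp hi), mul_zero]), zero_add]
        positivity
    refine ⟨ms, by rw [hmslen, ht], ?_, ?_⟩
    · intro x hx
      rw [hms, List.mem_map] at hx
      obtain ⟨i, _, rfl⟩ := hx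
      exact Nat.one_le_pow _ _ (by omega)
    · apply appears_of_good
      obtain ⟨ps, hps⟩ : ∃ ps : List ((Fin r → ℤ) × ℕ), ps = Δs.zip ms := ⟨_, rfl⟩
      have hexpand : expandPath Δs ms = ps.flatMap fun p => List.replicate p.2 p.1 := by
        rw [hps]; rfl
      rw [hexpand]
      have hpslen : ps.length = t := by
        rw [hps, List.length_zip, hmslen, ← ht, min_self]
      have hpsget : ∀ i, i < t → ps.getD i default = (Δs.getD i 0, M ^ (t - 1 - i)) := by
        intro i hi
        rw [List.getD_eq_getElem _ _ (by rw [hpslen]; exact hi)]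
        simp only [hps, List.getElem_zip]
        rw [List.getD_eq_getElem _ _ (show i < Δs.length from ht ▸ hi),
          ← hmsget i hi, List.getD_eq_getElem _ _ (show i < ms.length from by rw [hmslen]; exact hi)]
      apply grec C ℓ ps 0 (fun k => le_refl 0)
      intro q hq k j hj
      rw [hpslen] at hq
      rw [hpsget q hq] at hj ⊢
      have hsumeq : ∑ i ∈ Finset.range q,
          ((ps.getD i default).2 : ℤ) * fk C ℓ (ps.getD i default).1 k
          = ∑ i ∈ Finset.range q, ((M ^ (t - 1 - i) : ℕ) : ℤ) * w i k :=
        Finset.sum_congr rfl fun i hi => by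
          rw [hpsget i (lt_trans (Finset.mem_range.mp hi) hq)]
          simp [hw]
      rw [hsumeq]
      simp only [Pi.zero_apply, zero_add, hw]
      have hstar := star q hq k j hj
      simp only [hw] at hstar
      exact hstar
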